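/- With the greedy-policy value-gradient setup: let Ṽ : ℝⁿ × ℝᵖ → ℝ be C², G̃(x, w) = ∇_x Ṽ(x, w), Q(x, a, w) = r(x, a) + γ Ṽ(f(x, a), w), and let π : ℝⁿ × ℝᵖ → ℝᵐ be C¹ and satisfy ∇_a Q(x, π(x, w), w) = 0 for all (x, w) in a neighborhood of each trajectory point (x_t, w₀). Fix x₀ and w₀; let x_{t+1} = f(x_t, π(x_t, w₀)), a_t = π(x_t, w₀), and let J(w) be the total reward Σ_{t=0}^{F−1} γᵗ r(x_t(w), a_t(w)) of the trajectory generated from x₀ by π(·, w). Define V_F(x, w) = 0, V_t(x, w) = r(x, π(x, w)) + γ V_{t+1}(f(x, π(x, w)), w), and set G'_t = ∇_x V_t(x_t, w₀) and G̃_t = G̃(x_t, w₀). Assume each Hessian H_t = ∂²Q/∂a∂a at (x_t, a_t, w₀) is invertible. Then ∇_w J(w₀) = Σ_{t=0}^{F−1} γ^{t+2} M_{t+1} Ω_t (G'_{t+1} − G̃_{t+1}), where M_{t+1} is the p × n matrix with entries ∂G̃^j/∂w^i evaluated at (x_{t+1}, w₀) and Ω_t = −(D_a f(x_t, a_t)) H_t⁻¹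 (D_a f(x_t, a_t))ᵀ. -/

import Mathlib

open Matrix

/-- Gradient of a scalar function, as a vector of partial derivatives. -/
noncomputable def grad {k : ℕ} (g : (Fin k → ℝ) → ℝ) (x : Fin k → ℝ) : Fin k → ℝ :=
  fun i => fderiv ℝ g x (Pi.single i 1)

/-- Jacobian of `f` in the action variable (rows indexed by output components). -/
noncomputable def jacA {n m : ℕ} (f : (Fin n → ℝ) × (Fin m → ℝ) → Fin n → ℝ)
    (x : Fin n → ℝ) (a : Fin m → ℝ) : Matrix (Fin n) (Fin m) ℝ :=
  Matrix.of fun j i => fderiv ℝ (fun b => f (x, b) j) a (Pi.single i 1)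

/-- The trajectory generated from `x₀` by the policy `π(·, w)`. -/
def trajW {n m p : ℕ} (f : (Fin n → ℝ) × (Fin m → ℝ) → Fin n → ℝ)
    (π : (Fin n → ℝ) × (Fin p → ℝ) → Fin m → ℝ)
    (x₀ : Fin n → ℝ) (w : Fin p → ℝ) : ℕ → Fin n → ℝ
  | 0 => x₀
  | t + 1 => f (trajW f π x₀ w t, π (trajW f π x₀ w t, w))

section Helpers

variable {E F' G' : Type*} [NormedAddCommGroup E] [NormedSpace ℝ E]
  [NormedAddCommGroup F'] [NormedSpace ℝ F'] [NormedAddCommGroup G'] [NormedSpace ℝ G']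

theorem clm_pi_expand {k : ℕ} (L : (Fin k → ℝ) →L[ℝ] G') (v : Fin k → ℝ) :
    L v = ∑ l, v l • L (Pi.single l 1) := by
  have hv : v = ∑ l, v l • (Pi.single l 1 : Fin k → ℝ) := by
    funext j
    simp [Finset.sum_apply, Pi.single_apply]
  conv_lhs => rw [hv]
  rw [map_sum]
  simp

theorem hasFDerivAt_partial_fst {g : E × F' → G'} {L : E × F' →L[ℝ] G'} {x : E} {y : F'}
    (h : HasFDerivAt g L (x, y)) :
    HasFDerivAt (fun x' => g (x', y)) (L.comp (ContinuousLinearMap.inl ℝ E F')) x := by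
  have h1 : HasFDerivAt (fun x' : E => (x', y)) (ContinuousLinearMap.inl ℝ E F') x := by
    have h2 : (ContinuousLinearMap.inl ℝ E F') = (ContinuousLinearMap.id ℝ E).prod (0 : E →L[ℝ] F') := by
      ext v <;> simp
    rw [h2]
    exact HasFDerivAt.prodMk (hasFDerivAt_id x) (hasFDerivAt_const y x)
  exact h.comp x h1

theorem hasFDerivAt_partial_snd {g : E × F' → G'} {L : E × F' →L[ℝ] G'} {x : E} {y : F'}
    (h : HasFDerivAt g L (x, y)) :
    HasFDerivAt (fun y' => g (x, y')) (L.comp (ContinuousLinearMap.inr ℝ E F')) y := by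
  have h1 : HasFDerivAt (fun y' : F' => (x, y')) (ContinuousLinearMap.inr ℝ E F') y := by
    have h2 : (ContinuousLinearMap.inr ℝ E F') = (0 : F' →L[ℝ] E).prod (ContinuousLinearMap.id ℝ F') := by
      ext v <;> simp
    rw [h2]
    exact HasFDerivAt.prodMk (hasFDerivAt_const x y) (hasFDerivAt_id y)
  exact h.comp y h1

end Helpers

/-- finite-horizon value function -/
noncomputable def Uaux {n m p : ℕ} (γ : ℝ) (f : (Fin n → ℝ) × (Fin m → ℝ) → Fin n → ℝ)
    (r : (Fin n → ℝ) × (Fin m → ℝ) → ℝ)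
    (π : (Fin n → ℝ) × (Fin p → ℝ) → Fin m → ℝ) : ℕ → (Fin n → ℝ) × (Fin p → ℝ) → ℝ
  | 0 => fun _ => 0
  | k + 1 => fun q => r (q.1, π q) + γ * Uaux γ f r π k (f (q.1, π q), q.2)

theorem Uaux_contDiff {n m p : ℕ} (γ : ℝ) {f : (Fin n → ℝ) × (Fin m → ℝ) → Fin n → ℝ}
    {r : (Fin n → ℝ) × (Fin m → ℝ) → ℝ} {π : (Fin n → ℝ) × (Fin p → ℝ) → Fin m → ℝ}
    (hf : ContDiff ℝ 1 f) (hr : ContDiff ℝ 1 r) (hπ : ContDiff ℝ 1 π) (k : ℕ) :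
    ContDiff ℝ 1 (Uaux γ f r π k) := by
  induction k with
  | zero => exact contDiff_const
  | succ k ih =>
      have hinner : ContDiff ℝ 1 (fun q : (Fin n → ℝ) × (Fin p → ℝ) => ((q.1, π q) : (Fin n → ℝ) × (Fin m → ℝ))) :=
        ContDiff.prodMk contDiff_fst hπ
      exact (hr.comp hinner).add (contDiff_const.mul (ih.comp (ContDiff.prodMk (hf.comp hinner) contDiff_snd)))

theorem trajW_shift {n m p : ℕ} (f : (Fin n → ℝ) × (Fin m → ℝ) → Fin n → ℝ)
    (π : (Fin n → ℝ) × (Fin p → ℝ) → Fin m → ℝ) (x₀ : Fin n → ℝ) (w : Fin p → ℝ) (s : ℕ) :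
    trajW f π x₀ w (s + 1) = trajW f π (f (x₀, π (x₀, w))) w s := by
  induction s with
  | zero => rfl
  | succ s ih => show f _ = f _; rw [ih]

theorem Uaux_eq_sum {n m p : ℕ} (γ : ℝ) (f : (Fin n → ℝ) × (Fin m → ℝ) → Fin n → ℝ)
    (r : (Fin n → ℝ) × (Fin m → ℝ) → ℝ) (π : (Fin n → ℝ) × (Fin p → ℝ) → Fin m → ℝ)
    (k : ℕ) : ∀ (x' : Fin n → ℝ) (w : Fin p → ℝ),
    Uaux γ f r π k (x', w) = ∑ s ∈ Finset.range k,
      γ ^ s * r (trajW f π x' w s, π (trajW f π x' w s, w)) := by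
  induction k with
  | zero => intro x' w; simp [Uaux]
  | succ k ih =>
      intro x' w
      rw [Finset.sum_range_succ' _ k]
      show r (x', π (x', w)) + γ * Uaux γ f r π k (f (x', π (x', w)), w) = _
      rw [ih]
      rw [Finset.mul_sum, add_comm]
      congr 1
      · refine Finset.sum_congr rfl fun s _ => ?_
        rw [trajW_shift]
        ring
      · show r (x', π (x', w)) = γ ^ 0 * r (trajW f π x' w 0, π (trajW f π x' w 0, w))
        simp [trajW]

set_option maxHeartbeats 4000000 in
/-- Section 4 of the paper, Eq. 29: policy-gradient learning
applied to a greedy policy on a value function produces a weight update equal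
to the VGL(1) weight update with `Ω_t = −(D_a f) (∂²Q/∂a²)⁻¹ (D_a f)ᵀ`. -/
theorem stmt13 {n m p : ℕ} (F : ℕ) (hF : 1 ≤ F) (γ : ℝ)
    (f : (Fin n → ℝ) × (Fin m → ℝ) → Fin n → ℝ)
    (r : (Fin n → ℝ) × (Fin m → ℝ) → ℝ)
    (hf : ContDiff ℝ 2 f) (hr : ContDiff ℝ 2 r)
    (Vtilde : (Fin n → ℝ) × (Fin p → ℝ) → ℝ) (hVtilde : ContDiff ℝ 2 Vtilde)
    (Gtilde : (Fin n → ℝ) → (Fin p → ℝ) → Fin n → ℝ)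
    (hGtilde : ∀ x w j, Gtilde x w j =
      fderiv ℝ (fun x' => Vtilde (x', w)) x (Pi.single j 1))
    (Q : (Fin n → ℝ) → (Fin m → ℝ) → (Fin p → ℝ) → ℝ)
    (hQ : ∀ x a w, Q x a w = r (x, a) + γ * Vtilde (f (x, a), w))
    (π : (Fin n → ℝ) × (Fin p → ℝ) → Fin m → ℝ) (hπ : ContDiff ℝ 1 π)
    (x₀ : Fin n → ℝ) (w₀ : Fin p → ℝ)
    (x : ℕ → Fin n → ℝ) (hx : ∀ t, x t = trajW f π x₀ w₀ t)
    (a : ℕ → Fin m → ℝ) (ha : ∀ t, a t = π (x t, w₀))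
    (hfoc : ∀ t < F, ∀ᶠ q : (Fin n → ℝ) × (Fin p → ℝ) in nhds (x t, w₀),
      ∀ j : Fin m, fderiv ℝ (fun b => Q q.1 b q.2) (π q) (Pi.single j 1) = 0)
    (J : (Fin p → ℝ) → ℝ)
    (hJ : ∀ w, J w = ∑ t ∈ Finset.range F,
      γ ^ t * r (trajW f π x₀ w t, π (trajW f π x₀ w t, w)))
    (V : ℕ → (Fin n → ℝ) × (Fin p → ℝ) → ℝ)
    (hVF : ∀ x' w, V F (x', w) = 0)
    (hVrec : ∀ t < F, ∀ x' w, V t (x', w) =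
      r (x', π (x', w)) + γ * V (t + 1) (f (x', π (x', w)), w))
    (GP : ℕ → Fin n → ℝ)
    (hGP : ∀ t j, GP t j = fderiv ℝ (fun x' => V t (x', w₀)) (x t) (Pi.single j 1))
    (GT : ℕ → Fin n → ℝ) (hGT : ∀ t, GT t = Gtilde (x t) w₀)
    (H : ℕ → Matrix (Fin m) (Fin m) ℝ)
    (hH : ∀ t j k, H t j k =
      fderiv ℝ (fun b => fderiv ℝ (fun b' => Q (x t) b' w₀) b (Pi.single k 1))
        (a t) (Pi.single j 1))
    (hHinv : ∀ t < F, IsUnit (H t).det)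
    (M : ℕ → Matrix (Fin p) (Fin n) ℝ)
    (hM : ∀ t i j, M t i j = fderiv ℝ (fun w => Gtilde (x t) w j) w₀ (Pi.single i 1))
    (Ω : ℕ → Matrix (Fin n) (Fin n) ℝ)
    (hΩ : ∀ t, Ω t = -(jacA f (x t) (a t) * (H t)⁻¹ * (jacA f (x t) (a t))ᵀ)) :
    grad J w₀ = ∑ t ∈ Finset.range F,
      γ ^ (t + 2) • (M (t + 1)).mulVec ((Ω t).mulVec (GP (t + 1) - GT (t + 1))) := by
  classical
  have hf1 : ContDiff ℝ 1 f := hf.of_le one_le_two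
  have hr1 : ContDiff ℝ 1 r := hr.of_le one_le_two
  set U : ℕ → (Fin n → ℝ) × (Fin p → ℝ) → ℝ := Uaux γ f r π with hUdef
  have hUc : ∀ k, ContDiff ℝ 1 (U k) := Uaux_contDiff γ hf1 hr1 hπ
  -- trajectory step
  have hstep : ∀ t, x (t + 1) = f (x t, a t) := by
    intro t; rw [hx (t + 1), ha t, hx t]; rfl
  -- V agrees with U
  have hVU : ∀ d t, t + d = F → ∀ q : (Fin n → ℝ) × (Fin p → ℝ), V t q = U d q := by
    intro d
    induction d with
    | zero =>
        intro t htd q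
        have hEq : t = F := by omega
        have h0 : V t (q.1, q.2) = 0 := by rw [hEq]; exact hVF q.1 q.2
        exact h0
    | succ d ih =>
        intro t htd q
        have ht : t < F := by omega
        have h1 := hVrec t ht q.1 q.2
        have h2 := ih (t + 1) (by omega) (f (q.1, π (q.1, q.2)), q.2)
        show V t (q.1, q.2) = _
        rw [h1, h2]
        rfl
  -- the gradient sequence
  set gv : ℕ → Fin p → ℝ :=
    fun t i => fderiv ℝ (fun w => U (F - t) (x t, w)) w₀ (Pi.single i 1) with hgvdef
  -- grad J = gv 0
  have hJ0 : grad J w₀ = gv 0 := by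
    have hJU : J = fun w => U F (x₀, w) := by
      funext w
      rw [hJ, hUdef, Uaux_eq_sum]
    have hx0 : x 0 = x₀ := hx 0
    funext i
    show fderiv ℝ J w₀ (Pi.single i 1) = _
    rw [hJU, hgvdef]
    simp only [Nat.sub_zero, hx0]
  -- core recursion
  have hcore : ∀ t, t < F → gv t =
      γ ^ 2 • (M (t + 1) * Ω t).mulVec (GP (t + 1) - GT (t + 1)) + γ • gv (t + 1) := by
    intro t ht
    have hα : π (x t, w₀) = a t := (ha t).symm
    -- partial derivative maps at the trajectory point
    have hπd : HasFDerivAt π (fderiv ℝ π (x t, w₀)) (x t, w₀) :=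
      (hπ.differentiable one_ne_zero (x t, w₀)).hasFDerivAt
    set P : (Fin p → ℝ) →L[ℝ] (Fin m → ℝ) :=
      (fderiv ℝ π (x t, w₀)).comp (ContinuousLinearMap.inr ℝ (Fin n → ℝ) (Fin p → ℝ)) with hPdef
    have hP : HasFDerivAt (fun w => π (x t, w)) P w₀ := hasFDerivAt_partial_snd hπd
    have hfd : HasFDerivAt f (fderiv ℝ f (x t, a t)) (x t, a t) :=
      (hf1.differentiable one_ne_zero _).hasFDerivAt
    set Fa : (Fin m → ℝ) →L[ℝ] (Fin n → ℝ) :=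
      (fderiv ℝ f (x t, a t)).comp (ContinuousLinearMap.inr ℝ (Fin n → ℝ) (Fin m → ℝ)) with hFadef
    have hFa : HasFDerivAt (fun b => f (x t, b)) Fa (a t) := hasFDerivAt_partial_snd hfd
    have hrd : HasFDerivAt r (fderiv ℝ r (x t, a t)) (x t, a t) :=
      (hr1.differentiable one_ne_zero _).hasFDerivAt
    set Ra : (Fin m → ℝ) →L[ℝ] ℝ :=
      (fderiv ℝ r (x t, a t)).comp (ContinuousLinearMap.inr ℝ (Fin n → ℝ) (Fin m → ℝ)) with hRadef
    have hRa : HasFDerivAt (fun b => r (x t, b)) Ra (a t) := hasFDerivAt_partial_snd hrd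
    -- Jacobian entries
    have hjac : ∀ (l : Fin n) (j : Fin m), jacA f (x t) (a t) l j = Fa (Pi.single j 1) l := by
      intro l j
      have h1 : HasFDerivAt (fun b => f (x t, b) l)
          ((ContinuousLinearMap.proj l).comp Fa) (a t) :=
        (ContinuousLinearMap.proj (R := ℝ) (φ := fun _ : Fin n => ℝ) l).hasFDerivAt.comp (a t) hFa
      show fderiv ℝ (fun b => f (x t, b) l) (a t) (Pi.single j 1) = _
      rw [h1.fderiv]
      rfl
    -- Gtilde representation
    have hVd : Differentiable ℝ Vtilde := hVtilde.differentiable two_ne_zero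
    have hGrep : ∀ (y : Fin n → ℝ) (w : Fin p → ℝ) (l : Fin n),
        Gtilde y w l = (fderiv ℝ Vtilde (y, w)) (Pi.single l 1, 0) := by
      intro y w l
      rw [hGtilde]
      rw [(hasFDerivAt_partial_fst (hVd (y, w)).hasFDerivAt).fderiv]
      rfl
    have hVtd : ContDiff ℝ 1 (fderiv ℝ Vtilde) := hVtilde.fderiv_right (by norm_num)
    have hGdiff : ∀ (y : Fin n → ℝ) (l : Fin n),
        Differentiable ℝ (fun w => Gtilde y w l) := by
      intro y l
      have h1 : (fun w => Gtilde y w l)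
          = fun w => (fderiv ℝ Vtilde (y, w)) ((Pi.single l 1 : Fin n → ℝ), (0 : Fin p → ℝ)) := by
        funext w; exact hGrep y w l
      rw [h1]
      exact Differentiable.clm_apply
        ((hVtd.differentiable one_ne_zero).comp (Differentiable.prodMk (differentiable_const _) differentiable_id))
        (differentiable_const _)
    -- the Q-value function in (action, weight)
    set Qf : (Fin m → ℝ) × (Fin p → ℝ) → ℝ :=
      fun q => r (x t, q.1) + γ * Vtilde (f (x t, q.1), q.2) with hQfdef
    have hQf2 : ContDiff ℝ 2 Qf := by
      have h1 : ContDiff ℝ 2 (fun q : (Fin m → ℝ) × (Fin p → ℝ) =>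
          ((x t, q.1) : (Fin n → ℝ) × (Fin m → ℝ))) := ContDiff.prodMk contDiff_const contDiff_fst
      exact (hr.comp h1).add (contDiff_const.mul (hVtilde.comp (ContDiff.prodMk (hf.comp h1) contDiff_snd)))
    have hQfd : Differentiable ℝ Qf := hQf2.differentiable two_ne_zero
    set Ψ : Fin m → (Fin m → ℝ) × (Fin p → ℝ) → ℝ :=
      fun j q => fderiv ℝ (fun b' => Q (x t) b' q.2) q.1 (Pi.single j 1) with hΨdef
    have hΨrep : ∀ j q, Ψ j q
        = (fderiv ℝ Qf q) ((Pi.single j 1 : Fin m → ℝ), (0 : Fin p → ℝ)) := by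
      intro j q
      show fderiv ℝ (fun b' => Q (x t) b' q.2) q.1 (Pi.single j 1) = _
      have h1 : (fun b' => Q (x t) b' q.2) = fun b' => Qf (b', q.2) := by
        funext b'; exact hQ (x t) b' q.2
      rw [h1, (hasFDerivAt_partial_fst (hQfd (q.1, q.2)).hasFDerivAt).fderiv]
      rfl
    have hΨc : ∀ j, ContDiff ℝ 1 (Ψ j) := by
      intro j
      have h1 : (Ψ j) = fun q => (fderiv ℝ Qf q) ((Pi.single j 1 : Fin m → ℝ), (0 : Fin p → ℝ)) := by
        funext q; exact hΨrep j q
      rw [h1]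
      exact (hQf2.fderiv_right (by norm_num)).clm_apply contDiff_const
    have hΨdAt : ∀ j, HasFDerivAt (Ψ j) (fderiv ℝ (Ψ j) (a t, w₀)) (a t, w₀) :=
      fun j => (((hΨc j).differentiable one_ne_zero) _).hasFDerivAt
    set D : Fin m → ((Fin m → ℝ) × (Fin p → ℝ)) →L[ℝ] ℝ :=
      fun j => fderiv ℝ (Ψ j) (a t, w₀) with hDdef
    -- second derivative in a: entries of H
    have hDb : ∀ (j k : Fin m), (D k) ((Pi.single j 1 : Fin m → ℝ), (0 : Fin p → ℝ)) = H t j k := by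
      intro j k
      rw [hH t j k]
      have h2 := hasFDerivAt_partial_fst (hΨdAt k)
      show _ = fderiv ℝ (fun b => Ψ k (b, w₀)) (a t) (Pi.single j 1)
      rw [h2.fderiv]
      rfl
    -- explicit form of Ψ along b = a t
    have hΨat : ∀ (j : Fin m) (w : Fin p → ℝ), Ψ j (a t, w)
        = Ra (Pi.single j 1) + γ * ∑ l, Fa (Pi.single j 1) l * Gtilde (x (t + 1)) w l := by
      intro j w
      have hLw : HasFDerivAt (fun x'' => Vtilde (x'', w))
          ((fderiv ℝ Vtilde (f (x t, a t), w)).comp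
            (ContinuousLinearMap.inl ℝ (Fin n → ℝ) (Fin p → ℝ))) (f (x t, a t)) :=
        hasFDerivAt_partial_fst (hVd _).hasFDerivAt
      have hcomp : HasFDerivAt (fun b' => Vtilde (f (x t, b'), w))
          (((fderiv ℝ Vtilde (f (x t, a t), w)).comp
            (ContinuousLinearMap.inl ℝ (Fin n → ℝ) (Fin p → ℝ))).comp Fa) (a t) :=
        HasFDerivAt.comp (g := fun x'' => Vtilde (x'', w)) (f := fun b => f (x t, b)) (a t) hLw hFa
      have htot : HasFDerivAt (fun b' => Q (x t) b' w)
          (Ra + γ • (((fderiv ℝ Vtilde (f (x t, a t), w)).comp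
            (ContinuousLinearMap.inl ℝ (Fin n → ℝ) (Fin p → ℝ))).comp Fa)) (a t) := by
        have h1 : (fun b' => Q (x t) b' w) = fun b' => r (x t, b') + γ * Vtilde (f (x t, b'), w) := by
          funext b'; exact hQ (x t) b' w
        rw [h1]
        exact hRa.add (hcomp.const_mul γ)
      show fderiv ℝ (fun b' => Q (x t) b' w) (a t) (Pi.single j 1) = _
      rw [htot.fderiv]
      have hexp : ((fderiv ℝ Vtilde (f (x t, a t), w)).comp
            (ContinuousLinearMap.inl ℝ (Fin n → ℝ) (Fin p → ℝ))) (Fa (Pi.single j 1))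
          = ∑ l, Fa (Pi.single j 1) l * Gtilde (x (t + 1)) w l := by
        rw [clm_pi_expand (((fderiv ℝ Vtilde (f (x t, a t), w)).comp
          (ContinuousLinearMap.inl ℝ (Fin n → ℝ) (Fin p → ℝ)))) (Fa (Pi.single j 1))]
        refine Finset.sum_congr rfl fun l _ => ?_
        rw [smul_eq_mul]
        congr 1
        rw [hGrep (x (t + 1)) w l, hstep t]
        rfl
      simp only [ContinuousLinearMap.add_apply, ContinuousLinearMap.coe_smul', Pi.smul_apply,
        smul_eq_mul]
      rw [ContinuousLinearMap.comp_apply ((fderiv ℝ Vtilde (f (x t, a t), w)).comp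
        (ContinuousLinearMap.inl ℝ (Fin n → ℝ) (Fin p → ℝ))) Fa, hexp]
    -- w-partial derivative of Ψ
    have hΨw : ∀ (j : Fin m) (i : Fin p), (D j) ((0 : Fin m → ℝ), Pi.single i 1)
        = γ * ∑ l, Fa (Pi.single j 1) l * M (t + 1) i l := by
      intro j i
      have h2 := hasFDerivAt_partial_snd (hΨdAt j)
      have h3 : (fun w => Ψ j (a t, w)) = fun w =>
          Ra (Pi.single j 1) + γ * ∑ l, Fa (Pi.single j 1) l * Gtilde (x (t + 1)) w l := by
        funext w; exact hΨat j w
      have h4 : (D j) ((0 : Fin m → ℝ), Pi.single i 1)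
          = fderiv ℝ (fun w => Ψ j (a t, w)) w₀ (Pi.single i 1) := by
        rw [h2.fderiv]; rfl
      rw [h4, h3]
      have hdsum : DifferentiableAt ℝ
          (fun w => ∑ l, Fa (Pi.single j 1) l * Gtilde (x (t + 1)) w l) w₀ := by
        refine DifferentiableAt.fun_sum fun l _ => ?_
        exact ((hGdiff (x (t + 1)) l) w₀).const_mul _
      rw [fderiv_const_add, fderiv_const_mul hdsum]
      rw [fderiv_fun_sum (fun l _ => ((hGdiff (x (t + 1)) l) w₀).const_mul _)]
      simp only [ContinuousLinearMap.smul_apply, ContinuousLinearMap.sum_apply, smul_eq_mul]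
      congr 1
      refine Finset.sum_congr rfl fun l _ => ?_
      rw [fderiv_const_mul ((hGdiff (x (t + 1)) l) w₀)]
      simp only [ContinuousLinearMap.smul_apply, smul_eq_mul]
      rw [← hM (t + 1) i l]
    -- first-order condition along w
    have hfocW : ∀ᶠ w in nhds w₀, ∀ j, Ψ j (π (x t, w), w) = 0 := by
      have hc : Filter.Tendsto (fun w : Fin p → ℝ => ((x t, w) : (Fin n → ℝ) × (Fin p → ℝ)))
          (nhds w₀) (nhds (x t, w₀)) :=
        (Continuous.tendsto (continuous_const.prodMk continuous_id) w₀)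
      exact hc.eventually (hfoc t ht)
    have hfoc0 : ∀ j, Ψ j (a t, w₀) = 0 := by
      intro j
      have h1 := hfocW.self_of_nhds j
      rwa [hα] at h1
    have hRaval : ∀ j, Ra (Pi.single j 1)
        = -(γ * ∑ l, Fa (Pi.single j 1) l * GT (t + 1) l) := by
      intro j
      have h1 := hfoc0 j
      rw [hΨat j w₀] at h1
      rw [hGT (t + 1)]
      linarith
    -- differentiate the first-order condition in w
    have hKey : ∀ (i : Fin p) (j : Fin m), (∑ k, P (Pi.single i 1) k * H t k j)
        + γ * ∑ l, Fa (Pi.single j 1) l * M (t + 1) i l = 0 := by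
      intro i j
      have hinner : HasFDerivAt (fun w => ((π (x t, w), w) : (Fin m → ℝ) × (Fin p → ℝ)))
          (P.prod (ContinuousLinearMap.id ℝ (Fin p → ℝ))) w₀ := hP.prodMk (hasFDerivAt_id w₀)
      have hψ' : HasFDerivAt (Ψ j) (D j) (π (x t, w₀), w₀) := by
        rw [hα]; exact hΨdAt j
      have hcomp : HasFDerivAt ((Ψ j) ∘ (fun w => ((π (x t, w), w) : (Fin m → ℝ) × (Fin p → ℝ))))
          ((D j).comp (P.prod (ContinuousLinearMap.id ℝ (Fin p → ℝ)))) w₀ :=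
        HasFDerivAt.comp (f := fun w => ((π (x t, w), w) : (Fin m → ℝ) × (Fin p → ℝ)))
          (g := Ψ j) w₀ hψ' hinner
      have hzero : fderiv ℝ (fun w => Ψ j (π (x t, w), w)) w₀ = 0 := by
        have hEq : (fun w => Ψ j (π (x t, w), w)) =ᶠ[nhds w₀] (fun _ => (0 : ℝ)) :=
          hfocW.mono (fun w hw => hw j)
        rw [hEq.fderiv_eq]
        exact fderiv_const_apply 0
      have h0 : (D j) (P (Pi.single i 1), Pi.single i 1) = 0 := by
        have h5 : fderiv ℝ (fun w => Ψ j (π (x t, w), w)) w₀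
            = (D j).comp (P.prod (ContinuousLinearMap.id ℝ (Fin p → ℝ))) := hcomp.fderiv
        rw [hzero] at h5
        have h6 := congrArg (fun (L : (Fin p → ℝ) →L[ℝ] ℝ) => L (Pi.single i 1)) h5.symm
        simpa using h6
      have hsplit : (D j) (P (Pi.single i 1), Pi.single i 1)
          = (D j) (P (Pi.single i 1), (0 : Fin p → ℝ))
            + (D j) ((0 : Fin m → ℝ), Pi.single i 1) := by
        rw [← map_add]
        norm_num
      have hfst : (D j) (P (Pi.single i 1), (0 : Fin p → ℝ))
          = ∑ k, P (Pi.single i 1) k * H t k j := by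
        have h7 := clm_pi_expand ((D j).comp
          (ContinuousLinearMap.inl ℝ (Fin m → ℝ) (Fin p → ℝ))) (P (Pi.single i 1))
        simp only [ContinuousLinearMap.comp_apply, ContinuousLinearMap.inl_apply,
          smul_eq_mul] at h7
        rw [h7]
        exact Finset.sum_congr rfl fun k _ => by rw [hDb k j]
      rw [hsplit, hfst, hΨw j i] at h0
      exact h0
    -- matrix form of the policy derivative
    set Am : Matrix (Fin n) (Fin m) ℝ := jacA f (x t) (a t) with hAmdef
    set Pm : Matrix (Fin p) (Fin m) ℝ := Matrix.of (fun i k => P (Pi.single i 1) k) with hPmdef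
    have hPH : Pm * H t = (-γ) • (M (t + 1) * Am) := by
      ext i j
      have h1 := hKey i j
      have h2 : ∑ l, Fa (Pi.single j 1) l * M (t + 1) i l
          = ∑ l, M (t + 1) i l * Am l j := by
        refine Finset.sum_congr rfl fun l _ => ?_
        rw [hjac l j]
        ring
      rw [h2] at h1
      simp only [Matrix.smul_apply, Matrix.mul_apply, Matrix.of_apply, smul_eq_mul, hPmdef]
      linarith [h1]
    have hPmEq : Pm = ((-γ) • (M (t + 1) * Am)) * (H t)⁻¹ := by
      have h3 : Pm * (H t * (H t)⁻¹) = Pm := by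
        rw [Matrix.mul_nonsing_inv _ (hHinv t ht), Matrix.mul_one]
      calc Pm = Pm * (H t * (H t)⁻¹) := h3.symm
        _ = (Pm * H t) * (H t)⁻¹ := by rw [Matrix.mul_assoc]
        _ = ((-γ) • (M (t + 1) * Am)) * (H t)⁻¹ := by rw [hPH]
    have hPA : Pm * Amᵀ = γ • (M (t + 1) * Ω t) := by
      rw [hPmEq, hΩ t, ← hAmdef]
      simp only [Matrix.neg_mul, Matrix.smul_mul, Matrix.mul_neg, smul_neg, neg_smul,
        Matrix.mul_assoc]
    -- derivative of the value recursion in w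
    obtain ⟨k, hk1⟩ : ∃ k, F - t = k + 1 := ⟨F - t - 1, by omega⟩
    have hk2 : F - (t + 1) = k := by omega
    have hDUd : HasFDerivAt (U k) (fderiv ℝ (U k) (x (t + 1), w₀)) (x (t + 1), w₀) :=
      (((hUc k).differentiable one_ne_zero) _).hasFDerivAt
    set DU : ((Fin n → ℝ) × (Fin p → ℝ)) →L[ℝ] ℝ := fderiv ℝ (U k) (x (t + 1), w₀) with hDUdef
    have hRa' : HasFDerivAt (fun b => r (x t, b)) Ra (π (x t, w₀)) := by rw [hα]; exact hRa
    have hA : HasFDerivAt (fun w => r (x t, π (x t, w))) (Ra.comp P) w₀ :=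
      HasFDerivAt.comp (f := fun w => π (x t, w)) (g := fun b => r (x t, b)) w₀ hRa' hP
    have hFa' : HasFDerivAt (fun b => f (x t, b)) Fa (π (x t, w₀)) := by rw [hα]; exact hFa
    have hfp : HasFDerivAt (fun w => f (x t, π (x t, w))) (Fa.comp P) w₀ :=
      HasFDerivAt.comp (f := fun w => π (x t, w)) (g := fun b => f (x t, b)) w₀ hFa' hP
    have hDU' : HasFDerivAt (U k) DU (f (x t, π (x t, w₀)), w₀) := by
      rw [hα, ← hstep t]; exact hDUd
    have hinner2 : HasFDerivAt (fun w => ((f (x t, π (x t, w)), w) : (Fin n → ℝ) × (Fin p → ℝ)))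
        ((Fa.comp P).prod (ContinuousLinearMap.id ℝ (Fin p → ℝ))) w₀ :=
      hfp.prodMk (hasFDerivAt_id w₀)
    have hB : HasFDerivAt ((U k) ∘ (fun w => ((f (x t, π (x t, w)), w) : (Fin n → ℝ) × (Fin p → ℝ))))
        (DU.comp ((Fa.comp P).prod (ContinuousLinearMap.id ℝ (Fin p → ℝ)))) w₀ :=
      HasFDerivAt.comp w₀ hDU' hinner2
    have htot : HasFDerivAt (fun w => U (F - t) (x t, w))
        (Ra.comp P + γ • (DU.comp ((Fa.comp P).prod (ContinuousLinearMap.id ℝ (Fin p → ℝ))))) w₀ := by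
      have hUt : (fun w => U (F - t) (x t, w))
          = fun w => r (x t, π (x t, w)) + γ * U k (f (x t, π (x t, w)), w) := by
        rw [hk1]
        funext w
        show Uaux γ f r π (k + 1) (x t, w) = _
        simp only [Uaux]
        rfl
      rw [hUt]
      exact hA.add (hB.const_mul γ)
    funext i
    have hDUsnd : DU ((0 : Fin n → ℝ), Pi.single i 1) = gv (t + 1) i := by
      have h2 := hasFDerivAt_partial_snd hDUd
      show _ = fderiv ℝ (fun w => U (F - (t + 1)) (x (t + 1), w)) w₀ (Pi.single i 1)
      rw [hk2, h2.fderiv]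
      rfl
    have hGPval : ∀ l, GP (t + 1) l = DU (Pi.single l 1, (0 : Fin p → ℝ)) := by
      intro l
      rw [hGP (t + 1) l]
      have hfun : (fun x' => V (t + 1) (x', w₀)) = fun x' => U k (x', w₀) := by
        funext x'
        exact hVU k (t + 1) (by omega) (x', w₀)
      rw [hfun, (hasFDerivAt_partial_fst hDUd).fderiv]
      rfl
    have hDUfst : ∀ v : Fin n → ℝ, DU (v, (0 : Fin p → ℝ)) = ∑ l, v l * GP (t + 1) l := by
      intro v
      have h7 := clm_pi_expand (DU.comp (ContinuousLinearMap.inl ℝ (Fin n → ℝ) (Fin p → ℝ))) v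
      simp only [ContinuousLinearMap.comp_apply, ContinuousLinearMap.inl_apply,
        smul_eq_mul] at h7
      rw [h7]
      exact Finset.sum_congr rfl fun l _ => by rw [hGPval l]
    show fderiv ℝ (fun w => U (F - t) (x t, w)) w₀ (Pi.single i 1) = _
    rw [htot.fderiv]
    simp only [ContinuousLinearMap.add_apply, ContinuousLinearMap.coe_smul', Pi.smul_apply,
      smul_eq_mul, ContinuousLinearMap.comp_apply, ContinuousLinearMap.prod_apply,
      ContinuousLinearMap.coe_id', id_eq, Pi.add_apply]
    have hsplitDU : DU (Fa (P (Pi.single i 1)), Pi.single i 1)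
        = DU (Fa (P (Pi.single i 1)), (0 : Fin p → ℝ)) + DU ((0 : Fin n → ℝ), Pi.single i 1) := by
      rw [← map_add]
      norm_num
    rw [hsplitDU, hDUfst, hDUsnd]
    have hRaP : Ra (P (Pi.single i 1)) = ∑ j, P (Pi.single i 1) j * Ra (Pi.single j 1) := by
      rw [clm_pi_expand Ra (P (Pi.single i 1))]
      simp [smul_eq_mul]
    have hFaP : ∀ l, Fa (P (Pi.single i 1)) l = ∑ j, P (Pi.single i 1) j * Am l j := by
      intro l
      rw [clm_pi_expand Fa (P (Pi.single i 1)), Finset.sum_apply]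
      refine Finset.sum_congr rfl fun j _ => ?_
      rw [Pi.smul_apply, smul_eq_mul, hjac l j]
    -- expansions of the right-hand side
    have hexpand : ((Pm * Amᵀ).mulVec (GP (t + 1) - GT (t + 1))) i
        = ∑ l, (∑ j, P (Pi.single i 1) j * Am l j) * (GP (t + 1) l - GT (t + 1) l) := by
      simp only [Matrix.mulVec, dotProduct, Matrix.mul_apply, Matrix.transpose_apply,
        hPmdef, Matrix.of_apply, Pi.sub_apply]
    have hPmA : ((Pm * Amᵀ).mulVec (GP (t + 1) - GT (t + 1))) i
        = γ * ((M (t + 1) * Ω t).mulVec (GP (t + 1) - GT (t + 1))) i := by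
      rw [hPA, Matrix.smul_mulVec]
      simp [smul_eq_mul]
    have hright : γ ^ 2 * ((M (t + 1) * Ω t).mulVec (GP (t + 1) - GT (t + 1))) i
        = γ * ∑ l, (∑ j, P (Pi.single i 1) j * Am l j) * (GP (t + 1) l - GT (t + 1) l) := by
      rw [← hexpand, hPmA]
      ring
    -- the left-hand side pieces
    have hsum2 : ∑ l, Fa (P (Pi.single i 1)) l * GP (t + 1) l
        = ∑ l, (∑ j, P (Pi.single i 1) j * Am l j) * GP (t + 1) l :=
      Finset.sum_congr rfl fun l _ => by rw [hFaP l]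
    have hsum1 : ∑ j, P (Pi.single i 1) j * Ra (Pi.single j 1)
        = -(γ * ∑ l, (∑ j, P (Pi.single i 1) j * Am l j) * GT (t + 1) l) := by
      calc ∑ j, P (Pi.single i 1) j * Ra (Pi.single j 1)
          = ∑ j, ∑ l, -(γ * (P (Pi.single i 1) j * (Am l j * GT (t + 1) l))) := by
            refine Finset.sum_congr rfl fun j _ => ?_
            rw [hRaval j]
            simp only [← hjac]
            rw [Finset.mul_sum, mul_neg, Finset.mul_sum, ← Finset.sum_neg_distrib]
            exact Finset.sum_congr rfl fun l _ => by ring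
        _ = ∑ l, ∑ j, -(γ * (P (Pi.single i 1) j * (Am l j * GT (t + 1) l))) :=
            Finset.sum_comm
        _ = -(γ * ∑ l, (∑ j, P (Pi.single i 1) j * Am l j) * GT (t + 1) l) := by
            rw [Finset.mul_sum, ← Finset.sum_neg_distrib]
            refine Finset.sum_congr rfl fun l _ => ?_
            rw [Finset.sum_mul, Finset.mul_sum, ← Finset.sum_neg_distrib]
            exact Finset.sum_congr rfl fun j _ => by ring
    have hsub : ∑ l, (∑ j, P (Pi.single i 1) j * Am l j) * (GP (t + 1) l - GT (t + 1) l)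
        = ∑ l, (∑ j, P (Pi.single i 1) j * Am l j) * GP (t + 1) l
          - ∑ l, (∑ j, P (Pi.single i 1) j * Am l j) * GT (t + 1) l := by
      rw [← Finset.sum_sub_distrib]
      exact Finset.sum_congr rfl fun l _ => by ring
    rw [hRaP, hsum1, hsum2, hright, hsub]
    ring
  -- terminal
  have hterm : gv F = 0 := by
    funext i
    rw [hgvdef]
    simp only [Nat.sub_self]
    show fderiv ℝ (fun w => Uaux γ f r π 0 (x F, w)) w₀ (Pi.single i 1) = 0
    have : (fun w : Fin p → ℝ => Uaux γ f r π 0 (x F, w)) = fun _ => (0 : ℝ) := rfl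
    rw [this, fderiv_fun_const]
    rfl
  -- unroll
  have hunroll : ∀ d t, t + d = F → gv t = ∑ s ∈ Finset.range d,
      γ ^ (s + 2) • (M (t + s + 1) * Ω (t + s)).mulVec (GP (t + s + 1) - GT (t + s + 1)) := by
    intro d
    induction d with
    | zero =>
        intro t htd
        have : t = F := by omega
        subst this
        simp [hterm]
    | succ d ih =>
        intro t htd
        have ht : t < F := by omega
        rw [hcore t ht, ih (t + 1) (by omega), Finset.smul_sum,
          Finset.sum_range_succ' _ d, add_comm]
        congr 1
        · refine Finset.sum_congr rfl fun s _ => ?_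
          rw [smul_smul]
          have h1 : t + 1 + s = t + (s + 1) := by omega
          have h2 : γ * γ ^ (s + 2) = γ ^ (s + 1 + 2) := by ring
          rw [h1, h2]
  -- conclude
  rw [hJ0, hunroll F 0 (by omega)]
  refine Finset.sum_congr rfl fun t _ => ?_
  rw [Matrix.mulVec_mulVec]
  norm_num
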